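/- Suppose (γ_u) is a bounded sequence of positive reals with γ_u → γ_∞ at stretched-exponential rate |γ_u − γ_∞| ≤ C e^{−cu^{1/2}}, and (α_j), (β_ℓ) are nonnegative sequences with α_j γ_j ≤ C e^{−cj^{1/2}} and β_ℓ γ_ℓ ≤ C e^{−cℓ^{1/2}}. Define φ_u = Σ_{j+ℓ ≤ u} α_j γ_j β_ℓ γ_ℓ γ_{u−j−ℓ} and φ_∞ = γ_∞ (Σ_j α_j γ_j)(Σ_ℓ β_ℓ γ_ℓ). Then |φ_u − φ_∞| ≤ C' e^{−c' u^{1/2}} for suitable constants C', c' > 0. -/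

import Mathlib

/-!
Statement 19 (convolution asymptotics): suppose (γ_u) is a bounded sequence of
positive reals with |γ_u − γ_∞| ≤ C e^{−c√u}, and (α_j), (β_ℓ) are nonnegative
sequences with α_j γ_j ≤ C e^{−c√j} and β_ℓ γ_ℓ ≤ C e^{−c√ℓ}.  With
φ_u = Σ_{j+ℓ≤u} α_j γ_j β_ℓ γ_ℓ γ_{u−j−ℓ} and
φ_∞ = γ_∞ (Σ_j α_j γ_j)(Σ_ℓ β_ℓ γ_ℓ), one has |φ_u − φ_∞| ≤ C' e^{−c'√u}.
-/


private lemma my_sqrt_add_le (x y : ℝ) (hx : 0 ≤ x) (hy : 0 ≤ y) :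
    Real.sqrt (x + y) ≤ Real.sqrt x + Real.sqrt y := by
  have hx2 := Real.sq_sqrt hx
  have hy2 := Real.sq_sqrt hy
  have h : x + y ≤ (Real.sqrt x + Real.sqrt y) ^ 2 := by
    nlinarith [mul_nonneg (Real.sqrt_nonneg x) (Real.sqrt_nonneg y)]
  calc Real.sqrt (x + y) ≤ Real.sqrt ((Real.sqrt x + Real.sqrt y) ^ 2) :=
        Real.sqrt_le_sqrt h
    _ = Real.sqrt x + Real.sqrt y := Real.sqrt_sq (by positivity)

private lemma my_pow5_le_exp (x : ℝ) (hx : 0 ≤ x) : x ^ 5 ≤ 3125 * Real.exp x := by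
  have h1 : x / 5 ≤ Real.exp (x / 5) :=
    le_trans (by linarith) (Real.add_one_le_exp (x / 5))
  have h2 : (x / 5) ^ 5 ≤ (Real.exp (x / 5)) ^ 5 :=
    pow_le_pow_left₀ (by positivity) h1 5
  have h3 : (Real.exp (x / 5)) ^ 5 = Real.exp x := by
    rw [← Real.exp_nat_mul]; congr 1; push_cast; ring
  have h4 : (x / 5) ^ 5 = x ^ 5 / 3125 := by ring
  rw [h3] at h2
  linarith

private lemma my_t4_bound (ε : ℝ) (hε : 0 < ε) (t : ℝ) (ht : 0 ≤ t) :
    ε ^ 4 * (t ^ 4 * Real.exp (-ε * t)) ≤ 3125 := by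
  have hE : (0:ℝ) < Real.exp (-ε * t) := Real.exp_pos _
  rcases le_or_gt (ε * t) 1 with h | h
  · have h1 : Real.exp (-ε * t) ≤ 1 := by
      rw [← Real.exp_zero]
      exact Real.exp_le_exp.mpr (by nlinarith)
    have h2 : (ε * t) ^ 4 ≤ 1 := pow_le_one₀ (by positivity) h
    nlinarith [pow_nonneg (mul_nonneg hε.le ht) 4]
  · have h5 := my_pow5_le_exp (ε * t) (by positivity)
    have h4 : (ε * t) ^ 4 ≤ (ε * t) ^ 5 :=
      pow_le_pow_right₀ h.le (by norm_num)
    have hEpos : (0:ℝ) < Real.exp (ε * t) := Real.exp_pos _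
    have hkey : (ε * t) ^ 4 ≤ 3125 * Real.exp (ε * t) := h4.trans h5
    have hinv : Real.exp (-ε * t) = (Real.exp (ε * t))⁻¹ := by
      rw [← Real.exp_neg]; ring_nf
    rw [hinv, show ε ^ 4 * (t ^ 4 * (Real.exp (ε * t))⁻¹)
        = (ε * t) ^ 4 / Real.exp (ε * t) by rw [div_eq_mul_inv]; ring,
      div_le_iff₀ hEpos]
    linarith

private lemma my_t4_bound' (ε : ℝ) (hε : 0 < ε) (t : ℝ) (ht : 0 ≤ t) :
    t ^ 4 * Real.exp (-ε * t) ≤ 3125 / ε ^ 4 := by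
  rw [le_div_iff₀ (pow_pos hε 4)]
  nlinarith [my_t4_bound ε hε t ht]

private lemma my_poly_bound (ε : ℝ) (hε : 0 < ε) (u : ℕ) :
    ((u:ℝ) + 1) ^ 2 * Real.exp (-ε * Real.sqrt u) ≤ 2 * (3125 / ε ^ 4) + 2 := by
  set t := Real.sqrt (u:ℝ) with htdef
  have ht : 0 ≤ t := Real.sqrt_nonneg _
  have hu : (u:ℝ) = t ^ 2 := (Real.sq_sqrt (Nat.cast_nonneg u)).symm
  have h4 := my_t4_bound' ε hε t ht
  have hE1 : Real.exp (-ε * t) ≤ 1 := by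
    rw [← Real.exp_zero]
    exact Real.exp_le_exp.mpr (by nlinarith)
  have hE0 : (0:ℝ) ≤ Real.exp (-ε * t) := (Real.exp_pos _).le
  rw [hu]
  have hint : 0 ≤ Real.exp (-ε * t) * (t ^ 2 - 1) ^ 2 :=
    mul_nonneg hE0 (sq_nonneg _)
  generalize hD : (3125:ℝ) / ε ^ 4 = D at h4 ⊢
  linarith

private lemma my_summable_exp_sqrt (ε : ℝ) (hε : 0 < ε) :
    Summable (fun n : ℕ => Real.exp (-ε * Real.sqrt n)) := by
  rw [← summable_nat_add_iff 1]
  have h0 : Summable (fun n : ℕ => 1 / (n:ℝ) ^ 2) :=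
    Real.summable_one_div_nat_pow.mpr (by norm_num)
  have h1 : Summable (fun n : ℕ => 1 / ((n:ℝ) + 1) ^ 2) := by
    have := (summable_nat_add_iff (f := fun n : ℕ => 1 / (n:ℝ) ^ 2) 1).mpr h0
    simpa using this
  refine Summable.of_nonneg_of_le (fun n => (Real.exp_pos _).le)
    (fun n => ?_) (h1.mul_left (3125 / ε ^ 4))
  have hcast : ((n + 1 : ℕ) : ℝ) = (n : ℝ) + 1 := by push_cast; ring
  set t := Real.sqrt ((n:ℝ) + 1) with htdef
  have ht : 0 ≤ t := Real.sqrt_nonneg _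
  have ht4 : t ^ 4 = ((n:ℝ) + 1) ^ 2 := by
    rw [show t ^ 4 = (t ^ 2) ^ 2 by ring, Real.sq_sqrt (by positivity)]
  have hp : (0:ℝ) < ((n:ℝ) + 1) ^ 2 := by positivity
  have hb := my_t4_bound' ε hε t ht
  rw [ht4] at hb
  calc Real.exp (-ε * Real.sqrt ((n + 1 : ℕ) : ℝ))
      = (((n:ℝ) + 1) ^ 2 * Real.exp (-ε * t)) * (1 / ((n:ℝ) + 1) ^ 2) := by
        rw [hcast, ← htdef]; field_simp
    _ ≤ (3125 / ε ^ 4) * (1 / ((n:ℝ) + 1) ^ 2) := by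
        apply mul_le_mul_of_nonneg_right hb (by positivity)

set_option maxHeartbeats 1000000 in
private theorem conv_aux (γ : ℕ → ℝ) (γinf : ℝ) (a b : ℕ → ℝ) (C c : ℝ)
    (hC : 0 < C) (hc : 0 < c)
    (hγlim : ∀ u : ℕ, |γ u - γinf| ≤ C * Real.exp (-c * Real.sqrt u))
    (ha0 : ∀ j, 0 ≤ a j) (hb0 : ∀ j, 0 ≤ b j)
    (ha : ∀ j : ℕ, a j ≤ C * Real.exp (-c * Real.sqrt j))
    (hb : ∀ j : ℕ, b j ≤ C * Real.exp (-c * Real.sqrt j)) :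
    ∃ C' : ℝ, 0 < C' ∧ ∃ c' : ℝ, 0 < c' ∧ ∀ u : ℕ,
      |(∑ j ∈ Finset.range (u + 1), ∑ k ∈ Finset.range (u + 1 - j),
          a j * b k * γ (u - j - k)) -
        γinf * (∑' j : ℕ, a j) * (∑' k : ℕ, b k)| ≤
      C' * Real.exp (-c' * Real.sqrt u) := by
  have hc2 : (0:ℝ) < c / 2 := by linarith
  set S := ∑' n : ℕ, Real.exp (-(c/2) * Real.sqrt n) with hSdef
  have hSsum : Summable (fun n : ℕ => Real.exp (-(c/2) * Real.sqrt n)) :=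
    my_summable_exp_sqrt _ hc2
  have hS0 : 0 ≤ S := tsum_nonneg fun n => (Real.exp_pos _).le
  have hcsum : Summable (fun n : ℕ => C * Real.exp (-c * Real.sqrt n)) :=
    (my_summable_exp_sqrt c hc).mul_left C
  have hasum : Summable a := Summable.of_nonneg_of_le ha0 ha hcsum
  have hbsum : Summable b := Summable.of_nonneg_of_le hb0 hb hcsum
  set A := ∑' j : ℕ, a j with hAdef
  set B := ∑' k : ℕ, b k with hBdef
  have hA0 : 0 ≤ A := tsum_nonneg ha0
  have hB0 : 0 ≤ B := tsum_nonneg hb0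
  -- tail bound
  have tail : ∀ f : ℕ → ℝ, (∀ j, 0 ≤ f j) →
      (∀ j : ℕ, f j ≤ C * Real.exp (-c * Real.sqrt j)) → Summable f →
      ∀ m : ℕ, (∑' j : ℕ, f j) - ∑ j ∈ Finset.range m, f j ≤
        C * Real.exp (-(c/2) * Real.sqrt m) * S := by
    intro f hf0 hf hfs m
    have key := Summable.sum_add_tsum_nat_add (f := f) m hfs
    have hle : ∑' i : ℕ, f (i + m) ≤
        ∑' i : ℕ, (C * Real.exp (-(c/2) * Real.sqrt m)) * Real.exp (-(c/2) * Real.sqrt i) := by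
      refine Summable.tsum_le_tsum (fun i => ?_) ((summable_nat_add_iff m).mpr hfs)
        (hSsum.mul_left _)
      have h2 : Real.sqrt (i:ℝ) ≤ Real.sqrt ((i:ℝ) + m) :=
        Real.sqrt_le_sqrt (by linarith [Nat.cast_nonneg (α := ℝ) m])
      have h3 : Real.sqrt (m:ℝ) ≤ Real.sqrt ((i:ℝ) + m) :=
        Real.sqrt_le_sqrt (by linarith [Nat.cast_nonneg (α := ℝ) i])
      calc f (i + m) ≤ C * Real.exp (-c * Real.sqrt ((i + m : ℕ) : ℝ)) := hf _
        _ ≤ C * Real.exp (-(c/2) * Real.sqrt m) * Real.exp (-(c/2) * Real.sqrt i) := by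
            rw [mul_assoc, ← Real.exp_add]
            refine mul_le_mul_of_nonneg_left ?_ hC.le
            apply Real.exp_le_exp.mpr
            push_cast
            nlinarith [mul_le_mul_of_nonneg_left h2 hc2.le,
              mul_le_mul_of_nonneg_left h3 hc2.le]
    rw [tsum_mul_left, ← hSdef] at hle
    linarith [key, hle]
  have hsaleU : ∀ n : ℕ, ∑ j ∈ Finset.range n, a j ≤ A :=
    fun n => Summable.sum_le_tsum _ (fun j _ => ha0 j) hasum
  have hsbleU : ∀ n : ℕ, ∑ k ∈ Finset.range n, b k ≤ B :=
    fun n => Summable.sum_le_tsum _ (fun k _ => hb0 k) hbsum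
  set Kp : ℝ := 2 * (3125 / (c/2) ^ 4) + 2 with hKp
  have hKp0 : 0 < Kp := by positivity
  clear_value S A B
  refine ⟨Kp * C ^ 3 + |γinf| * (C * S * (A + B)) + 1, ?_, c / 4, by linarith, fun u => ?_⟩
  · have h1 : 0 ≤ |γinf| * (C * S * (A + B)) :=
      mul_nonneg (abs_nonneg _) (mul_nonneg (mul_nonneg hC.le hS0) (by linarith))
    nlinarith [pow_pos hC 3]
  -- per-u estimate
  set m := u / 2 + 1 with hm
  set e4 := Real.exp (-(c/4) * Real.sqrt u) with he4
  have he40 : 0 < e4 := Real.exp_pos _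
  set e2 := Real.exp (-(c/2) * Real.sqrt u) with he2
  have he24 : e2 ≤ e4 := Real.exp_le_exp.mpr (by
    nlinarith [Real.sqrt_nonneg (u:ℝ), hc])
  have he20 : 0 < e2 := Real.exp_pos _
  set R := ∑ j ∈ Finset.range (u + 1), ∑ k ∈ Finset.range (u + 1 - j), a j * b k with hR
  set Φ := ∑ j ∈ Finset.range (u + 1), ∑ k ∈ Finset.range (u + 1 - j),
      a j * b k * γ (u - j - k) with hΦ
  set E := Real.exp (-(c/2) * Real.sqrt m) with hE
  have hE0 : 0 < E := Real.exp_pos _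
  clear_value Kp e4 e2 E R Φ
  -- Step A
  have hstepA : |Φ - γinf * R| ≤ Kp * C ^ 3 * e4 := by
    have hdiff : Φ - γinf * R = ∑ j ∈ Finset.range (u + 1),
        ∑ k ∈ Finset.range (u + 1 - j), a j * b k * (γ (u - j - k) - γinf) := by
      rw [hΦ, hR, Finset.mul_sum, ← Finset.sum_sub_distrib]
      refine Finset.sum_congr rfl fun j _ => ?_
      rw [Finset.mul_sum, ← Finset.sum_sub_distrib]
      exact Finset.sum_congr rfl fun k _ => by ring
    have hbound : ∀ j ∈ Finset.range (u + 1), ∀ k ∈ Finset.range (u + 1 - j),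
        |a j * b k * (γ (u - j - k) - γinf)| ≤ C ^ 3 * Real.exp (-c * Real.sqrt u) := by
      intro j hj k hk
      simp only [Finset.mem_range] at hj hk
      have hn : (u - j - k) + (j + k) = u := by omega
      have h1 : |a j * b k * (γ (u - j - k) - γinf)|
          = a j * b k * |γ (u - j - k) - γinf| := by
        rw [abs_mul, abs_of_nonneg (mul_nonneg (ha0 j) (hb0 k))]
      rw [h1]
      have hsqrt : Real.sqrt (u:ℝ) ≤
          Real.sqrt ((u - j - k : ℕ) : ℝ) + (Real.sqrt j + Real.sqrt k) := by
        have hn' : ((u - j - k : ℕ) : ℝ) + ((j:ℝ) + (k:ℝ)) = (u:ℝ) := by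
          exact_mod_cast congrArg (Nat.cast : ℕ → ℝ) hn
        have e1 : Real.sqrt ((j:ℝ) + (k:ℝ)) ≤ Real.sqrt j + Real.sqrt k :=
          my_sqrt_add_le _ _ (Nat.cast_nonneg j) (Nat.cast_nonneg k)
        have e2' : Real.sqrt (u:ℝ) ≤
            Real.sqrt ((u - j - k : ℕ) : ℝ) + Real.sqrt ((j:ℝ) + (k:ℝ)) := by
          rw [← hn']
          exact my_sqrt_add_le _ _ (Nat.cast_nonneg _) (by positivity)
        linarith
      calc a j * b k * |γ (u - j - k) - γinf|
          ≤ (C * Real.exp (-c * Real.sqrt j)) * (C * Real.exp (-c * Real.sqrt k))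
            * (C * Real.exp (-c * Real.sqrt ((u - j - k : ℕ) : ℝ))) := by
            refine mul_le_mul (mul_le_mul (ha j) (hb k) (hb0 k) (by positivity))
              (hγlim _) (abs_nonneg _) (by positivity)
        _ = C ^ 3 * Real.exp (-c * Real.sqrt j + -c * Real.sqrt k +
              -c * Real.sqrt ((u - j - k : ℕ) : ℝ)) := by
            rw [Real.exp_add, Real.exp_add]; ring
        _ ≤ C ^ 3 * Real.exp (-c * Real.sqrt u) := by
            refine mul_le_mul_of_nonneg_left ?_ (by positivity)
            apply Real.exp_le_exp.mpr
            nlinarith [mul_le_mul_of_nonneg_left hsqrt hc.le]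
    have hsum1 : |Φ - γinf * R| ≤ ((u:ℝ) + 1) * (((u:ℝ) + 1) * (C ^ 3 *
        Real.exp (-c * Real.sqrt u))) := by
      rw [hdiff]
      refine le_trans (Finset.abs_sum_le_sum_abs _ _) ?_
      have hin : ∀ j ∈ Finset.range (u + 1),
          |∑ k ∈ Finset.range (u + 1 - j), a j * b k * (γ (u - j - k) - γinf)| ≤
          ((u:ℝ) + 1) * (C ^ 3 * Real.exp (-c * Real.sqrt u)) := by
        intro j hj
        refine le_trans (Finset.abs_sum_le_sum_abs _ _) ?_
        refine le_trans (Finset.sum_le_sum (fun k hk => hbound j hj k hk)) ?_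
        rw [Finset.sum_const, nsmul_eq_mul]
        refine mul_le_mul_of_nonneg_right ?_ (by positivity)
        rw [Finset.card_range]
        exact_mod_cast (by omega : u + 1 - j ≤ u + 1)
      refine le_trans (Finset.sum_le_sum hin) ?_
      rw [Finset.sum_const, nsmul_eq_mul, Finset.card_range]
      push_cast
      exact le_rfl
    have hexp2 : Real.exp (-c * Real.sqrt u) = e2 * e2 := by
      rw [he2, ← Real.exp_add]; congr 1; ring
    have hpoly := my_poly_bound (c/2) hc2 u
    calc |Φ - γinf * R| ≤ ((u:ℝ) + 1) * (((u:ℝ) + 1) * (C ^ 3 *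
        Real.exp (-c * Real.sqrt u))) := hsum1
      _ = C ^ 3 * ((((u:ℝ) + 1) ^ 2) * e2) * e2 := by rw [hexp2]; ring
      _ ≤ C ^ 3 * Kp * e2 := by
          refine mul_le_mul_of_nonneg_right ?_ he20.le
          refine mul_le_mul_of_nonneg_left ?_ (by positivity)
          rw [hKp, he2]
          exact hpoly
      _ ≤ C ^ 3 * Kp * e4 := by
          refine mul_le_mul_of_nonneg_left he24 ?_
          positivity
      _ = Kp * C ^ 3 * e4 := by ring
  -- Step B
  have hRAB : R ≤ A * B := by
    have h1 : R = ∑ j ∈ Finset.range (u + 1), a j * ∑ k ∈ Finset.range (u + 1 - j), b k := by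
      rw [hR]; exact Finset.sum_congr rfl fun j _ => by rw [Finset.mul_sum]
    rw [h1]
    calc ∑ j ∈ Finset.range (u + 1), a j * ∑ k ∈ Finset.range (u + 1 - j), b k
        ≤ ∑ j ∈ Finset.range (u + 1), a j * B :=
          Finset.sum_le_sum fun j _ => mul_le_mul_of_nonneg_left (hsbleU _) (ha0 j)
      _ = (∑ j ∈ Finset.range (u + 1), a j) * B := by rw [← Finset.sum_mul]
      _ ≤ A * B := mul_le_mul_of_nonneg_right (hsaleU _) hB0
  have hbox : (∑ j ∈ Finset.range m, a j) * (∑ k ∈ Finset.range m, b k) ≤ R := by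
    rw [Finset.sum_mul]
    have h1 : ∀ j ∈ Finset.range m,
        a j * ∑ k ∈ Finset.range m, b k ≤ a j * ∑ k ∈ Finset.range (u + 1 - j), b k := by
      intro j hj
      simp only [Finset.mem_range] at hj
      refine mul_le_mul_of_nonneg_left ?_ (ha0 j)
      refine Finset.sum_le_sum_of_subset_of_nonneg
        (Finset.range_subset_range.mpr (by omega)) (fun k _ _ => hb0 k)
    refine le_trans (Finset.sum_le_sum h1) ?_
    have h2 : ∑ j ∈ Finset.range m, a j * ∑ k ∈ Finset.range (u + 1 - j), b k ≤
        ∑ j ∈ Finset.range (u + 1), a j * ∑ k ∈ Finset.range (u + 1 - j), b k := by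
      refine Finset.sum_le_sum_of_subset_of_nonneg
        (Finset.range_subset_range.mpr (by omega))
        (fun j _ _ => mul_nonneg (ha0 j) (Finset.sum_nonneg fun k _ => hb0 k))
    refine le_trans h2 ?_
    rw [hR]
    refine le_of_eq (Finset.sum_congr rfl fun j _ => ?_)
    rw [Finset.mul_sum]
  have hta := tail a ha0 ha hasum m
  have htb := tail b hb0 hb hbsum m
  rw [← hE] at hta htb
  rw [← hAdef] at hta
  rw [← hBdef] at htb
  have hsb0 : 0 ≤ ∑ k ∈ Finset.range m, b k := Finset.sum_nonneg fun k _ => hb0 k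
  have hsble : ∑ k ∈ Finset.range m, b k ≤ B := hsbleU m
  have hEe4 : E ≤ e4 := by
    rw [hE, he4]
    apply Real.exp_le_exp.mpr
    have h4m : (u:ℝ) ≤ 4 * (m:ℝ) := by exact_mod_cast (by omega : u ≤ 4 * m)
    have hs : Real.sqrt (u:ℝ) ≤ 2 * Real.sqrt (m:ℝ) := by
      have h1 : Real.sqrt (u:ℝ) ≤ Real.sqrt (4 * (m:ℝ)) := Real.sqrt_le_sqrt h4m
      have h2 : Real.sqrt (4 * (m:ℝ)) = 2 * Real.sqrt (m:ℝ) := by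
        rw [show (4:ℝ) * (m:ℝ) = 2 ^ 2 * (m:ℝ) by norm_num, Real.sqrt_mul (by positivity),
          Real.sqrt_sq (by norm_num)]
      linarith
    nlinarith [mul_le_mul_of_nonneg_left hs (by linarith : (0:ℝ) ≤ c / 4)]
  have hstepB : |γinf * R - γinf * A * B| ≤ |γinf| * (C * S * (A + B)) * e4 := by
    have h1 : γinf * R - γinf * A * B = γinf * (R - A * B) := by ring
    rw [h1, abs_mul]
    have h2 : |R - A * B| = A * B - R := by
      rw [abs_sub_comm, abs_of_nonneg (by linarith)]
    rw [h2]
    have X1 : A * (B - ∑ k ∈ Finset.range m, b k) ≤ A * (C * E * S) :=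
      mul_le_mul_of_nonneg_left htb hA0
    have X2 : (∑ k ∈ Finset.range m, b k) * (A - ∑ j ∈ Finset.range m, a j) ≤
        (∑ k ∈ Finset.range m, b k) * (C * E * S) :=
      mul_le_mul_of_nonneg_left hta hsb0
    have X3 : (∑ k ∈ Finset.range m, b k) * (C * E * S) ≤ B * (C * E * S) :=
      mul_le_mul_of_nonneg_right hsble
        (mul_nonneg (mul_nonneg hC.le hE0.le) hS0)
    have hABR : A * B - R ≤ (C * S * (A + B)) * E := by linarith [X1, X2, X3, hbox]
    have hfin : (C * S * (A + B)) * E ≤ (C * S * (A + B)) * e4 :=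
      mul_le_mul_of_nonneg_left hEe4
        (mul_nonneg (mul_nonneg hC.le hS0) (by linarith))
    calc |γinf| * (A * B - R) ≤ |γinf| * ((C * S * (A + B)) * e4) :=
          mul_le_mul_of_nonneg_left (by linarith) (abs_nonneg _)
      _ = |γinf| * (C * S * (A + B)) * e4 := by ring
  -- combine
  calc |Φ - γinf * A * B| ≤ |Φ - γinf * R| + |γinf * R - γinf * A * B| := by
        have := abs_sub_le Φ (γinf * R) (γinf * A * B)
        linarith
    _ ≤ Kp * C ^ 3 * e4 + |γinf| * (C * S * (A + B)) * e4 := by linarith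
    _ ≤ (Kp * C ^ 3 + |γinf| * (C * S * (A + B)) + 1) * e4 := by nlinarith [he40.le]

theorem convolution_asymptotics
    (γ : ℕ → ℝ) (γinf : ℝ) (α β : ℕ → ℝ) (C c : ℝ) (hC : 0 < C) (hc : 0 < c)
    (hγpos : ∀ u, 0 < γ u) (hγbdd : ∃ bnd : ℝ, ∀ u, γ u ≤ bnd)
    (hγlim : ∀ u : ℕ, |γ u - γinf| ≤ C * Real.exp (-c * Real.sqrt u))
    (hα : ∀ j, 0 ≤ α j) (hβ : ∀ j, 0 ≤ β j)
    (hαγ : ∀ j : ℕ, α j * γ j ≤ C * Real.exp (-c * Real.sqrt j))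
    (hβγ : ∀ j : ℕ, β j * γ j ≤ C * Real.exp (-c * Real.sqrt j)) :
    ∃ C' : ℝ, 0 < C' ∧ ∃ c' : ℝ, 0 < c' ∧ ∀ u : ℕ,
      |(∑ j ∈ Finset.range (u + 1), ∑ k ∈ Finset.range (u + 1 - j),
          α j * γ j * (β k * γ k) * γ (u - j - k)) -
        γinf * (∑' j : ℕ, α j * γ j) * (∑' k : ℕ, β k * γ k)| ≤
      C' * Real.exp (-c' * Real.sqrt u) := by
  exact conv_aux γ γinf (fun j => α j * γ j) (fun k => β k * γ k) C c hC hc hγlim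
    (fun j => mul_nonneg (hα j) (hγpos j).le)
    (fun k => mul_nonneg (hβ k) (hγpos k).le) hαγ hβγ
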